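/- Let n ≥ 2, let i, j ∈ {1,...,n} with i ≠ j, and work on the open subset of ℝ^{n + n(n-1)} with coordinates (A_1,...,A_n, (A_{kl})_{k≠l}) where all A_k ≠ 0. For each k define the vector field V_k = A_k·∂_{A_k} + ∑_{l≠k} (A_{kl}·∂_{A_{kl}} − A_{lk}·∂_{A_{lk}}). Then the function T_{ij} = A_{ij}·A_j/A_i satisfies V_k(T_{ij}) = 0 for every k ∈ {1,...,n}. -/

import Mathlib

/-- Index type for the coordinates `A₁, …, Aₙ` (left summand) and
`A_{kl}` for `k ≠ l` (right summand). -/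
abbrev Idx (n : ℕ) := Fin n ⊕ {q : Fin n × Fin n // q.1 ≠ q.2}

/-- The vector field `V_k = A_k ∂_{A_k} + ∑_{l ≠ k} (A_{kl} ∂_{A_{kl}} − A_{lk} ∂_{A_{lk}})`. -/
def Vgen {n : ℕ} (k : Fin n) (p : Idx n → ℝ) : Idx n → ℝ := fun idx =>
  match idx with
  | .inl m => if m = k then p idx else 0
  | .inr ⟨(i, j), _⟩ => if i = k then p idx else if j = k then -p idx else 0

/-- The function `T_{ij} = A_{ij} A_j / A_i`. -/
noncomputable def Tinv {n : ℕ} (i j : Fin n) (h : i ≠ j) (p : Idx n → ℝ) : ℝ :=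
  p (.inr ⟨(i, j), h⟩) * p (.inl j) / p (.inl i)

theorem Tij_invariant {n : ℕ} (hn : 2 ≤ n) (i j : Fin n) (h : i ≠ j)
    (p : Idx n → ℝ) (hp : ∀ m, p (.inl m) ≠ 0) :
    ∀ k : Fin n, fderiv ℝ (Tinv i j h) p (Vgen k p) = 0 := by
  intro k
  have key : ∀ x : Idx n, HasFDerivAt (fun q : Idx n → ℝ => q x)
      (ContinuousLinearMap.proj (R := ℝ) (φ := fun _ : Idx n => ℝ) x) p := fun x =>
    hasFDerivAt_apply x p
  have ha := key (.inr ⟨(i, j), h⟩)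
  have hb := key (.inl j)
  have hc := key (.inl i)
  have hinv : HasFDerivAt (fun q : Idx n → ℝ => (q (.inl i))⁻¹)
      (-((p (.inl i) ^ 2)⁻¹ • ContinuousLinearMap.proj (R := ℝ) (φ := fun _ : Idx n => ℝ) (Sum.inl i))) p := by
    simpa [Function.comp_def] using (hasDerivAt_inv (hp i)).comp_hasFDerivAt p hc
  have hT := (ha.mul hb).mul hinv
  have heq : Tinv i j h =ᶠ[nhds p] fun y : Idx n → ℝ =>
      y (.inr ⟨(i, j), h⟩) * y (.inl j) * (y (.inl i))⁻¹ :=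
    Filter.Eventually.of_forall fun q => by simp [Tinv, div_eq_mul_inv]
  have hT' := hT.congr_of_eventuallyEq heq
  rw [hT'.fderiv]
  have va : Vgen k p (.inr ⟨(i, j), h⟩)
      = if i = k then p (.inr ⟨(i, j), h⟩) else if j = k then -p (.inr ⟨(i, j), h⟩) else 0 := rfl
  have vb : Vgen k p (.inl j) = if j = k then p (.inl j) else 0 := rfl
  have vc : Vgen k p (.inl i) = if i = k then p (.inl i) else 0 := rfl
  simp only [ContinuousLinearMap.add_apply, ContinuousLinearMap.smul_apply,
    ContinuousLinearMap.neg_apply, ContinuousLinearMap.proj_apply, smul_eq_mul,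
    va, vb, vc]
  rcases eq_or_ne i k with hik | hik <;> rcases eq_or_ne j k with hjk | hjk
  · exact absurd (hik.trans hjk.symm) h
  · simp only [if_pos hik, if_neg hjk]
    field_simp [hp i]
    simp only [Pi.mul_apply]
    ring
  · simp only [if_neg hik, if_pos hjk]
    field_simp [hp i]
    ring
  · simp [if_neg hik, if_neg hjk]
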